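/- With two equally likely scenarios and three decisions whose six costs C_i(x), C_i(y), C_i(z) (i = 1,2) are independent uniform random variables on [0,1], the expected average cost (over the two scenarios) of the decision chosen by the minimax cost rule equals 12/35. -/

import Mathlib

open MeasureTheory Set
open scoped Classical ENNReal

noncomputable section
namespace S14

def ν : Measure ℝ := volume.restrict (Icc 0 1)

instance : IsProbabilityMeasure ν := ⟨by simp [ν]⟩
instance : NullSingletonClass ν := by unfold ν; infer_instance

abbrev Ω := Fin 2 × Fin 3 → ℝ

def μ : Measure Ω := Measure.pi fun _ => ν

instance : IsProbabilityMeasure μ := by unfold μ; infer_instance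

def cube : Set Ω := {ω | ∀ p, ω p ∈ Icc (0:ℝ) 1}

lemma cube_eq : cube = Set.pi univ fun _ => Icc (0:ℝ) 1 := by
  ext ω
  simp only [cube, Set.mem_pi, mem_univ, forall_true_left, mem_setOf_eq]

lemma cube_meas : MeasurableSet cube := by
  rw [cube_eq]; exact MeasurableSet.univ_pi fun _ => measurableSet_Icc

lemma restrict_eq : volume.restrict cube = μ := by
  refine (Measure.pi_eq fun s hs => ?_).symm
  rw [Measure.restrict_apply (MeasurableSet.univ_pi hs), cube_eq, ← Set.pi_inter_distrib,
    volume_pi_pi]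
  exact Finset.prod_congr rfl fun i _ => (Measure.restrict_apply (hs i)).symm

def M (d : Fin 3) (ω : Ω) : ℝ := max (ω (0, d)) (ω (1, d))

def av (d : Fin 3) (ω : Ω) : ℝ := (ω (0, d) + ω (1, d)) / 2

def g (ω : Ω) : ℝ :=
  sInf {v : ℝ | ∃ d : Fin 3, (∀ d' : Fin 3, M d ω ≤ M d' ω) ∧ v = av d ω}

def hd (d : Fin 3) (ω : Ω) : ℝ :=
  if ω ∈ cube ∧ ∀ d', d' ≠ d → M d ω < M d' ω then av d ω else 0

lemma M_meas (d : Fin 3) : Measurable (M d) :=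
  (measurable_pi_apply _).max (measurable_pi_apply _)

lemma av_meas (d : Fin 3) : Measurable (av d) :=
  by unfold av; measurability

lemma hd_meas (d : Fin 3) : Measurable (hd d) := by
  apply Measurable.ite _ (av_meas d) measurable_const
  apply MeasurableSet.inter cube_meas
  show MeasurableSet {ω : Ω | ∀ d', d' ≠ d → M d ω < M d' ω}
  have : {ω : Ω | ∀ d', d' ≠ d → M d ω < M d' ω} =
      ⋂ d' ∈ ({d' | d' ≠ d} : Set (Fin 3)), {ω | M d ω < M d' ω} := by
    ext ω; simp
  rw [this]
  exact MeasurableSet.biInter (Set.to_countable _)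
    fun d' _ => measurableSet_lt (M_meas d) (M_meas d')

lemma hd_bd (d : Fin 3) (ω : Ω) : ‖hd d ω‖ ≤ 1 := by
  rw [hd]
  split_ifs with h
  · rcases h with ⟨hc, -⟩
    have h0 := hc (0, d); have h1 := hc (1, d)
    rw [Real.norm_eq_abs, abs_le, av]
    constructor <;> [linarith [h0.1, h1.1]; linarith [h0.2, h1.2]]
  · simp

lemma intg {α : Type*} [MeasurableSpace α] {m : Measure α} [IsProbabilityMeasure m]
    {f : α → ℝ} (hm : AEStronglyMeasurable f m) (hb : ∀ x, ‖f x‖ ≤ 1) : Integrable f m :=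
  Integrable.mono' (integrable_const 1) hm (Filter.Eventually.of_forall hb)

lemma hd_int (d : Fin 3) : Integrable (hd d) μ :=
  intg (hd_meas d).aestronglyMeasurable (hd_bd d)


lemma pairNull (p q : Fin 2 × Fin 3) (hpq : p ≠ q) : μ {ω : Ω | ω p = ω q} = 0 := by
  have hS : MeasurableSet {ω : Ω | ω p = ω q} :=
    measurableSet_eq_fun (measurable_pi_apply p) (measurable_pi_apply q)
  have hf : Measurable ({ω : Ω | ω p = ω q}.indicator (1 : Ω → ℝ≥0∞)) :=
    measurable_const.indicator hS
  rw [← lintegral_indicator_one hS]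
  show ∫⁻ a, {ω : Ω | ω p = ω q}.indicator 1 a ∂(Measure.pi fun _ => ν) = 0
  rw [lintegral_eq_lmarginal_univ (fun _ => (0:ℝ)),
    lmarginal_erase' _ hf (Finset.mem_univ q)]
  have hzero : (fun x : Ω => ∫⁻ xq, {ω : Ω | ω p = ω q}.indicator (1 : Ω → ℝ≥0∞)
      (Function.update x q xq) ∂ν) = fun _ => 0 := by
    funext x
    have : ∀ xq : ℝ, {ω : Ω | ω p = ω q}.indicator (1 : Ω → ℝ≥0∞) (Function.update x q xq)
        = ({x p} : Set ℝ).indicator (1 : ℝ → ℝ≥0∞) xq := by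
      intro xq
      simp only [Set.indicator_apply, mem_setOf_eq, mem_singleton_iff, Pi.one_apply,
        Function.update_of_ne hpq, Function.update_self, eq_comm]
    simp_rw [this]
    rw [lintegral_indicator_one (measurableSet_singleton _)]
    simp [measure_singleton]
  rw [hzero]
  simp [lmarginal]


lemma tieNull (d d' : Fin 3) (h : d ≠ d') : μ {ω : Ω | M d ω = M d' ω} = 0 := by
  have hsub : {ω : Ω | M d ω = M d' ω} ⊆
      {ω : Ω | ω (0,d) = ω (0,d')} ∪ {ω : Ω | ω (0,d) = ω (1,d')} ∪
      {ω : Ω | ω (1,d) = ω (0,d')} ∪ {ω : Ω | ω (1,d) = ω (1,d')} := by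
    intro ω hω
    simp only [mem_setOf_eq, M] at hω
    simp only [mem_union, mem_setOf_eq]
    rcases max_cases (ω (0,d)) (ω (1,d)) with ⟨h1,-⟩|⟨h1,-⟩ <;>
      rcases max_cases (ω (0,d')) (ω (1,d')) with ⟨h2,-⟩|⟨h2,-⟩ <;>
      rw [h1, h2] at hω <;> tauto
  have hne : ∀ i j : Fin 2, (i, d) ≠ (j, d') := by
    intro i j hij
    exact h (congrArg Prod.snd hij)
  refine measure_mono_null hsub ?_
  refine measure_union_null (measure_union_null (measure_union_null ?_ ?_) ?_) ?_ <;>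
    exact pairNull _ _ (hne _ _)

lemma cube_ae : ∀ᵐ ω ∂μ, ω ∈ cube := by
  have h1 : μ cube = 1 := by
    rw [cube_eq]
    show Measure.pi (fun _ => ν) _ = 1
    rw [Measure.pi_pi]
    simp [ν]
  rw [ae_iff]
  show μ cubeᶜ = 0
  exact (prob_compl_eq_zero_iff cube_meas).2 h1

lemma ties_ae : ∀ᵐ ω ∂μ, ∀ d d' : Fin 3, d ≠ d' → M d ω ≠ M d' ω := by
  have hB : μ (⋃ (d : Fin 3) (d' : Fin 3) (_ : d ≠ d'), {ω : Ω | M d ω = M d' ω}) = 0 :=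
    measure_iUnion_null fun d => measure_iUnion_null fun d' =>
      measure_iUnion_null fun hdd => tieNull d d' hdd
  rw [ae_iff]
  refine measure_mono_null ?_ hB
  intro ω hω
  simp only [mem_setOf_eq, not_forall] at hω
  obtain ⟨d, d', hne, heq⟩ := hω
  simp only [mem_iUnion]
  exact ⟨d, d', hne, not_not.1 heq⟩

lemma g_eq_on (ω : Ω) (hc : ω ∈ cube)
    (ht : ∀ d d' : Fin 3, d ≠ d' → M d ω ≠ M d' ω) : g ω = ∑ d, hd d ω := by
  obtain ⟨d₀, -, hmin⟩ := Finset.exists_min_image Finset.univ (fun d => M d ω)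
    ⟨0, Finset.mem_univ 0⟩
  have hmin' : ∀ d, M d₀ ω ≤ M d ω := fun d => hmin d (Finset.mem_univ d)
  have hset : {v : ℝ | ∃ d : Fin 3, (∀ d' : Fin 3, M d ω ≤ M d' ω) ∧ v = av d ω}
      = {av d₀ ω} := by
    ext v
    simp only [mem_setOf_eq, mem_singleton_iff]
    constructor
    · rintro ⟨d, hdm, rfl⟩
      have hdd : d = d₀ := by
        by_contra hne
        exact ht d d₀ hne (le_antisymm (hdm d₀) (hmin' d))
      rw [hdd]
    · rintro rfl
      exact ⟨d₀, hmin', rfl⟩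
  rw [g, hset, csInf_singleton]
  rw [Finset.sum_eq_single d₀]
  · rw [hd, if_pos]
    exact ⟨hc, fun d' hd' => lt_of_le_of_ne (hmin' d') (ht d₀ d' (Ne.symm hd'))⟩
  · intro d _ hne
    rw [hd, if_neg]
    rintro ⟨-, hstrict⟩
    exact absurd (hmin' d) (not_le.2 (hstrict d₀ (Ne.symm hne)))
  · intro hd0
    exact absurd (Finset.mem_univ d₀) hd0

lemma g_ae : g =ᵐ[μ] fun ω => ∑ d, hd d ω := by
  filter_upwards [cube_ae, ties_ae] with ω hc ht
  exact g_eq_on ω hc ht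

lemma comp_meas (σ : (Fin 2 × Fin 3) ≃ (Fin 2 × Fin 3)) :
    Measurable (fun ω : Ω => (ω ∘ σ : Ω)) :=
  measurable_pi_lambda _ fun p => measurable_pi_apply (σ p)

lemma perm_map (σ : (Fin 2 × Fin 3) ≃ (Fin 2 × Fin 3)) :
    Measure.map (fun ω : Ω => ω ∘ σ) μ = μ := by
  refine ((Measure.pi_eq fun s hs => ?_)).symm
  rw [Measure.map_apply (comp_meas σ) (MeasurableSet.univ_pi hs)]
  have hpre : (fun ω : Ω => ω ∘ σ) ⁻¹' (Set.pi univ s) = Set.pi univ fun p => s (σ.symm p) := by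
    ext ω
    simp only [mem_preimage, Set.mem_pi, mem_univ, forall_true_left, Function.comp_apply]
    constructor
    · intro h p
      simpa using h (σ.symm p)
    · intro h q
      simpa using h (σ q)
  rw [hpre]
  show Measure.pi (fun _ => ν) _ = _
  rw [Measure.pi_pi]
  exact Equiv.prod_comp σ.symm fun q => ν (s q)

lemma hd_comp (d : Fin 3) (ω : Ω) :
    hd 0 (fun p => ω (p.1, Equiv.swap 0 d p.2)) = hd d ω := by
  set s : Equiv.Perm (Fin 3) := Equiv.swap 0 d with hs
  set Φ : Ω := fun p => ω (p.1, s p.2) with hΦ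
  have hM : ∀ e, M e Φ = M (s e) ω := fun e => rfl
  have hs0 : s 0 = d := Equiv.swap_apply_left 0 d
  have hsd : s d = 0 := Equiv.swap_apply_right 0 d
  have hav : av 0 Φ = av d ω := by rw [hΦ]; simp [av, hs0]
  have hcube : Φ ∈ cube ↔ ω ∈ cube := by
    constructor
    · intro h p
      have h2 := h (p.1, s p.2)
      rw [hΦ] at h2
      simp only [hs, Equiv.swap_apply_self, Prod.mk.eta] at h2
      exact h2
    · intro h p
      exact h _
  have hcond : (∀ d', d' ≠ 0 → M 0 Φ < M d' Φ) ↔ (∀ e, e ≠ d → M d ω < M e ω) := by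
    simp_rw [hM, hs0]
    constructor
    · intro H e he
      have h1 : s e ≠ 0 := by
        intro h0
        apply he
        have := congrArg s h0
        rwa [Equiv.swap_apply_self, hs0] at this
      have := H (s e) h1
      rwa [Equiv.swap_apply_self] at this
    · intro H d' hd'
      refine H (s d') fun h0 => hd' ?_
      have := congrArg s h0
      rwa [Equiv.swap_apply_self, hsd] at this
  show (if Φ ∈ cube ∧ ∀ d', d' ≠ 0 → M 0 Φ < M d' Φ then av 0 Φ else 0) = hd d ω
  rw [hd]
  exact if_congr (and_congr hcube hcond) hav rfl

lemma int_hd (d : Fin 3) : ∫ ω, hd d ω ∂μ = ∫ ω, hd 0 ω ∂μ := by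
  set σ : (Fin 2 × Fin 3) ≃ (Fin 2 × Fin 3) := (Equiv.refl (Fin 2)).prodCongr (Equiv.swap 0 d)
    with hσ
  have step1 : ∫ ω, hd d ω ∂μ = ∫ ω, hd 0 (ω ∘ σ) ∂μ := by
    refine integral_congr_ae (Filter.Eventually.of_forall fun ω => ?_)
    exact (hd_comp d ω).symm
  have step2 : ∫ ω, hd 0 ω ∂(Measure.map (fun ω : Ω => ω ∘ σ) μ) = ∫ ω, hd 0 (ω ∘ σ) ∂μ :=
    integral_map (comp_meas σ).aemeasurable (hd_meas 0).aestronglyMeasurable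
  rw [step1, ← step2, perm_map σ]

abbrev R6 := ℝ × ℝ × ℝ × ℝ × ℝ × ℝ
def P : Measure R6 := ν.prod (ν.prod (ν.prod (ν.prod (ν.prod ν))))
instance : IsProbabilityMeasure P := by unfold P; infer_instance

def T (t : R6) : Ω := fun p =>
  if p = (0,0) then t.1 else if p = (1,0) then t.2.1 else if p = (0,1) then t.2.2.1
  else if p = (1,1) then t.2.2.2.1 else if p = (0,2) then t.2.2.2.2.1 else t.2.2.2.2.2

lemma T00 (t : R6) : T t (0,0) = t.1 := by norm_num [T, Prod.ext_iff, Fin.ext_iff]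
lemma T10 (t : R6) : T t (1,0) = t.2.1 := by norm_num [T, Prod.ext_iff, Fin.ext_iff]
lemma T01 (t : R6) : T t (0,1) = t.2.2.1 := by norm_num [T, Prod.ext_iff, Fin.ext_iff]
lemma T11 (t : R6) : T t (1,1) = t.2.2.2.1 := by norm_num [T, Prod.ext_iff, Fin.ext_iff]
lemma T02 (t : R6) : T t (0,2) = t.2.2.2.2.1 := by norm_num [T, Prod.ext_iff, Fin.ext_iff]
lemma T12 (t : R6) : T t (1,2) = t.2.2.2.2.2 := by norm_num [T, Prod.ext_iff, Fin.ext_iff]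

lemma T_meas : Measurable T := by
  apply measurable_pi_lambda
  intro p
  unfold T
  split_ifs <;> fun_prop

lemma map_T : Measure.map T P = μ := by
  refine ((Measure.pi_eq fun s hs => ?_)).symm
  rw [Measure.map_apply T_meas (MeasurableSet.univ_pi hs)]
  have hpre : T ⁻¹' (Set.pi univ s) =
      s (0,0) ×ˢ (s (1,0) ×ˢ (s (0,1) ×ˢ (s (1,1) ×ˢ (s (0,2) ×ˢ s (1,2))))) := by
    ext t
    simp only [mem_preimage, Set.mem_pi, mem_univ, forall_true_left, mem_prod]
    constructor
    · intro h
      refine ⟨?_, ?_, ?_, ?_, ?_, ?_⟩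
      · have := h (0,0); rwa [T00] at this
      · have := h (1,0); rwa [T10] at this
      · have := h (0,1); rwa [T01] at this
      · have := h (1,1); rwa [T11] at this
      · have := h (0,2); rwa [T02] at this
      · have := h (1,2); rwa [T12] at this
    · rintro ⟨h1, h2, h3, h4, h5, h6⟩ ⟨i, j⟩
      fin_cases i <;> fin_cases j
      · show T t (0,0) ∈ s (0,0); rwa [T00]
      · show T t (0,1) ∈ s (0,1); rwa [T01]
      · show T t (0,2) ∈ s (0,2); rwa [T02]
      · show T t (1,0) ∈ s (1,0); rwa [T10]
      · show T t (1,1) ∈ s (1,1); rwa [T11]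
      · show T t (1,2) ∈ s (1,2); rwa [T12]
  rw [hpre]
  unfold P
  rw [Measure.prod_prod, Measure.prod_prod, Measure.prod_prod, Measure.prod_prod,
    Measure.prod_prod]
  rw [Fintype.prod_prod_type]
  rw [show (∏ x : Fin 2, ∏ y : Fin 3, ν (s (x, y)))
      = (∏ y : Fin 3, ν (s (0, y))) * ∏ y : Fin 3, ν (s (1, y)) from Fin.prod_univ_two _,
    Fin.prod_univ_three, Fin.prod_univ_three]
  ring


def qi (x : ℝ) : ℝ := if x ∈ Icc (0:ℝ) 1 then 1 else 0
def i2 (a b e f : ℝ) : ℝ := if max a b < max e f then 1 else 0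
def F6 (a b c d e f : ℝ) : ℝ := qi c * (qi d * (i2 a b c d * (qi e * (qi f * i2 a b e f))))
def FF (t : R6) : ℝ :=
  qi t.1 * (qi t.2.1 * (((t.1 + t.2.1) / 2) *
    F6 t.1 t.2.1 t.2.2.1 t.2.2.2.1 t.2.2.2.2.1 t.2.2.2.2.2))

lemma unit_mul {x y : ℝ} (hx : x ∈ Icc (0:ℝ) 1) (hy : y ∈ Icc (0:ℝ) 1) :
    x * y ∈ Icc (0:ℝ) 1 :=
  ⟨mul_nonneg hx.1 hy.1, mul_le_one₀ hx.2 hy.1 hy.2⟩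

lemma qi_unit (x : ℝ) : qi x ∈ Icc (0:ℝ) 1 := by unfold qi; split_ifs <;> norm_num

lemma i2_unit (a b e f : ℝ) : i2 a b e f ∈ Icc (0:ℝ) 1 := by
  unfold i2; split_ifs <;> norm_num

lemma F6_unit (a b c d e f : ℝ) : F6 a b c d e f ∈ Icc (0:ℝ) 1 :=
  unit_mul (qi_unit _) (unit_mul (qi_unit _) (unit_mul (i2_unit _ _ _ _)
    (unit_mul (qi_unit _) (unit_mul (qi_unit _) (i2_unit _ _ _ _)))))

lemma FF_unit (t : R6) : FF t ∈ Icc (0:ℝ) 1 := by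
  by_cases ha : t.1 ∈ Icc (0:ℝ) 1
  · by_cases hb : t.2.1 ∈ Icc (0:ℝ) 1
    · have hav : (t.1 + t.2.1) / 2 ∈ Icc (0:ℝ) 1 := by
        constructor
        · linarith [ha.1, hb.1]
        · linarith [ha.2, hb.2]
      exact unit_mul (qi_unit _) (unit_mul (qi_unit _) (unit_mul hav (F6_unit _ _ _ _ _ _)))
    · have : qi t.2.1 = 0 := if_neg hb
      unfold FF
      rw [this]
      norm_num
  · have : qi t.1 = 0 := if_neg ha
    unfold FF
    rw [this]
    norm_num

lemma FF_bd (t : R6) : ‖FF t‖ ≤ 1 := by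
  have h := FF_unit t
  rw [Real.norm_eq_abs, abs_le]
  exact ⟨by linarith [h.1], h.2⟩

lemma qi_meas : Measurable qi :=
  Measurable.ite measurableSet_Icc measurable_const measurable_const

lemma FF_meas : Measurable FF := by
  unfold FF F6 i2
  have h1 : Measurable fun t : R6 => t.1 := measurable_fst
  have h2 : Measurable fun t : R6 => t.2.1 := measurable_snd.fst
  have h3 : Measurable fun t : R6 => t.2.2.1 := measurable_snd.snd.fst
  have h4 : Measurable fun t : R6 => t.2.2.2.1 := measurable_snd.snd.snd.fst
  have h5 : Measurable fun t : R6 => t.2.2.2.2.1 := measurable_snd.snd.snd.snd.fst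
  have h6 : Measurable fun t : R6 => t.2.2.2.2.2 := measurable_snd.snd.snd.snd.snd
  refine ((qi_meas.comp h1).mul ?_)
  refine ((qi_meas.comp h2).mul ?_)
  refine (((h1.add h2).div_const 2).mul ?_)
  refine ((qi_meas.comp h3).mul ?_)
  refine ((qi_meas.comp h4).mul ?_)
  refine (Measurable.mul ?_ ?_)
  · exact Measurable.ite (measurableSet_lt (h1.max h2) (h3.max h4))
      measurable_const measurable_const
  refine ((qi_meas.comp h5).mul ?_)
  refine ((qi_meas.comp h6).mul ?_)
  exact Measurable.ite (measurableSet_lt (h1.max h2) (h5.max h6))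
    measurable_const measurable_const


lemma indic_mul (p : Prop) [Decidable p] (x : ℝ) :
    (if p then (1:ℝ) else 0) * x = if p then x else 0 := by
  split_ifs <;> simp

lemma forall23 (Q : Fin 2 × Fin 3 → Prop) :
    (∀ p, Q p) ↔ Q (0,0) ∧ Q (1,0) ∧ Q (0,1) ∧ Q (1,1) ∧ Q (0,2) ∧ Q (1,2) := by
  constructor
  · intro h
    exact ⟨h _, h _, h _, h _, h _, h _⟩
  · rintro ⟨h1, h2, h3, h4, h5, h6⟩ ⟨i, j⟩
    fin_cases i <;> fin_cases j <;> assumption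

lemma forall3ne (Q : Fin 3 → Prop) : (∀ d', d' ≠ 0 → Q d') ↔ Q 1 ∧ Q 2 := by
  constructor
  · intro h
    exact ⟨h 1 (by decide), h 2 (by decide)⟩
  · rintro ⟨h1, h2⟩ d' hd'
    fin_cases d'
    · exact absurd rfl hd'
    · exact h1
    · exact h2

lemma FF_eq (t : R6) : FF t = hd 0 (T t) := by
  obtain ⟨a, b, c, d, e, f⟩ := t
  have hcube : T (a,b,c,d,e,f) ∈ cube ↔ (a ∈ Icc (0:ℝ) 1 ∧ b ∈ Icc (0:ℝ) 1 ∧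
      c ∈ Icc (0:ℝ) 1 ∧ d ∈ Icc (0:ℝ) 1 ∧ e ∈ Icc (0:ℝ) 1 ∧ f ∈ Icc (0:ℝ) 1) := by
    rw [show (T (a,b,c,d,e,f) ∈ cube) ↔ ∀ p, T (a,b,c,d,e,f) p ∈ Icc (0:ℝ) 1 from Iff.rfl,
      forall23, T00, T10, T01, T11, T02, T12]
  have hM0 : M 0 (T (a,b,c,d,e,f)) = max a b := by rw [M, T00, T10]
  have hM1 : M 1 (T (a,b,c,d,e,f)) = max c d := by rw [M, T01, T11]
  have hM2 : M 2 (T (a,b,c,d,e,f)) = max e f := by rw [M, T02, T12]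
  have hav : av 0 (T (a,b,c,d,e,f)) = (a + b) / 2 := by rw [av, T00, T10]
  have hcond : (∀ d', d' ≠ 0 → M 0 (T (a,b,c,d,e,f)) < M d' (T (a,b,c,d,e,f))) ↔
      (max a b < max c d ∧ max a b < max e f) := by
    rw [forall3ne fun d' => M 0 (T (a,b,c,d,e,f)) < M d' (T (a,b,c,d,e,f)), hM0, hM1, hM2]
  rw [hd, if_congr (and_congr hcube hcond) hav rfl]
  show qi a * (qi b * (((a + b) / 2) * (qi c * (qi d * (i2 a b c d *
      (qi e * (qi f * i2 a b e f))))))) = _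
  unfold qi i2
  simp only [indic_mul, mul_ite, mul_one, mul_zero, ← ite_and]
  exact if_congr (by tauto) rfl rfl

lemma int_h0_T : ∫ ω, hd 0 ω ∂μ = ∫ t, FF t ∂P := by
  rw [← map_T, integral_map T_meas.aemeasurable (hd_meas 0).aestronglyMeasurable]
  exact integral_congr_ae (Filter.Eventually.of_forall fun t => (FF_eq t).symm)

lemma nu_ae : ∀ᵐ x ∂ν, x ∈ Icc (0:ℝ) 1 := ae_restrict_mem measurableSet_Icc

lemma int_qi_mul (g : ℝ → ℝ) : ∫ x, qi x * g x ∂ν = ∫ x, g x ∂ν := by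
  refine integral_congr_ae ?_
  filter_upwards [nu_ae] with x hx
  rw [qi, if_pos hx, one_mul]

lemma nu_Ioi (m : ℝ) (hm : m ∈ Icc (0:ℝ) 1) : (ν (Ioi m)).toReal = 1 - m := by
  rw [ν, Measure.restrict_apply' measurableSet_Icc]
  have : Ioi m ∩ Icc 0 1 = Ioc m 1 := by
    ext x
    simp only [mem_inter_iff, mem_Ioi, mem_Icc, mem_Ioc]
    constructor
    · rintro ⟨h1, -, h3⟩
      exact ⟨h1, h3⟩
    · rintro ⟨h1, h2⟩
      exact ⟨h1, hm.1.trans h1.le, h2⟩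
  rw [this, Real.volume_Ioc, ENNReal.toReal_ofReal (by linarith [hm.2])]

lemma Lf (m e : ℝ) (hm : m ∈ Icc (0:ℝ) 1) :
    ∫ x, qi x * (if m < max e x then (1:ℝ) else 0) ∂ν = if m < e then 1 else 1 - m := by
  rw [int_qi_mul]
  by_cases h : m < e
  · rw [if_pos h]
    have heq : (fun x : ℝ => if m < max e x then (1:ℝ) else 0) = fun _ => 1 :=
      funext fun x => if_pos (lt_of_lt_of_le h (le_max_left _ _))
    rw [heq, integral_const]
    simp
  · rw [if_neg h]
    push_neg at h
    have heq : (fun x : ℝ => if m < max e x then (1:ℝ) else 0)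
        = (Ioi m).indicator fun _ => 1 := by
      funext x
      by_cases hx : m < x
      · rw [if_pos (lt_of_lt_of_le hx (le_max_right e x)), indicator_of_mem (show x ∈ Ioi m from hx)]
      · rw [if_neg (not_lt.2 (max_le h (not_lt.1 hx))), indicator_of_notMem (show x ∉ Ioi m from hx)]
    rw [heq, integral_indicator measurableSet_Ioi, setIntegral_const, measureReal_def, nu_Ioi m hm, smul_eq_mul,
      mul_one]

lemma Lmid (m : ℝ) (hm : m ∈ Icc (0:ℝ) 1) :
    ∫ u, qi u * (if m < u then (1:ℝ) else 1 - m) ∂ν = 1 - m^2 := by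
  rw [int_qi_mul]
  have heq : (fun u : ℝ => if m < u then (1:ℝ) else 1 - m)
      = fun u => (1 - m) + (Ioi m).indicator (fun _ => m) u := by
    funext u
    by_cases h : m < u
    · rw [if_pos h, indicator_of_mem (show u ∈ Ioi m from h)]
      ring
    · rw [if_neg h, indicator_of_notMem (show u ∉ Ioi m from h)]
      ring
  rw [heq, integral_add (integrable_const _)
    ((integrable_const m).indicator measurableSet_Ioi),
    integral_const, integral_indicator measurableSet_Ioi, setIntegral_const, measureReal_def, measureReal_def, nu_Ioi m hm,
    measure_univ]
  simp only [ENNReal.toReal_one, smul_eq_mul, one_mul]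
  ring

lemma L2 (m : ℝ) (hm : m ∈ Icc (0:ℝ) 1) :
    ∫ u, qi u * ∫ v, qi v * (if m < max u v then (1:ℝ) else 0) ∂ν ∂ν = 1 - m^2 := by
  have h1 : (fun u => qi u * ∫ v, qi v * (if m < max u v then (1:ℝ) else 0) ∂ν)
      = fun u => qi u * (if m < u then 1 else 1 - m) :=
    funext fun u => by rw [Lf m u hm]
  rw [h1, Lmid m hm]

lemma pow_deriv (c : ℝ) (n : ℕ) (x : ℝ) :
    HasDerivAt (fun b : ℝ => c * b^n) (c * (n * x^(n-1))) x :=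
  (hasDerivAt_pow n x).const_mul c

lemma lin_deriv (c x : ℝ) : HasDerivAt (fun b : ℝ => c * b) (c * 1) x :=
  (hasDerivAt_id x).const_mul c

lemma poly_b (a : ℝ) (ha : a ∈ Icc (0:ℝ) 1) :
    ∫ b in Icc (0:ℝ) 1, ((a+b)/2) * (1 - (max a b)^2)^2 ∂volume
      = 1/12 + (4/15)*a - (11/12)*a^4 + (17/30)*a^6 := by
  have hcont : Continuous fun b : ℝ => ((a+b)/2) * (1 - (max a b)^2)^2 :=
    ((continuous_const.add continuous_id).div_const 2).mul
      ((continuous_const.sub ((continuous_const.max continuous_id).pow 2)).pow 2)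
  rw [integral_Icc_eq_integral_Ioc, ← intervalIntegral.integral_of_le zero_le_one,
    ← intervalIntegral.integral_add_adjacent_intervals (a := (0:ℝ)) (b := a) (c := 1)
      (hcont.intervalIntegrable _ _) (hcont.intervalIntegrable _ _)]
  have piece1 : ∫ b in (0:ℝ)..a, ((a+b)/2) * (1 - (max a b)^2)^2
      = ((1-a^2)^2/2 * (a^2/2) + a*(1-a^2)^2/2 * a)
        - ((1-a^2)^2/2 * ((0:ℝ)^2/2) + a*(1-a^2)^2/2 * 0) := by
    rw [intervalIntegral.integral_congr (g := fun b => ((a+b)/2) * (1 - a^2)^2)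
      (fun b hb => by
        rw [uIcc_of_le ha.1] at hb
        simp only
        rw [max_eq_left hb.2])]
    refine intervalIntegral.integral_eq_sub_of_hasDerivAt
      (f := fun b : ℝ => (1-a^2)^2/2 * (b^2/2) + a*(1-a^2)^2/2 * b)
      (fun x _ => ?_) (Continuous.intervalIntegrable (by continuity) _ _)
    have h2 := pow_deriv ((1-a^2)^2/4) 2 x
    have h1 := lin_deriv (a*(1-a^2)^2/2) x
    have htot := h2.add h1
    have hfun : (fun b : ℝ => (1-a^2)^2/2 * (b^2/2) + a*(1-a^2)^2/2 * b)
        = fun b : ℝ => (1-a^2)^2/4 * b^2 + a*(1-a^2)^2/2 * b := by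
      funext b
      ring
    rw [hfun]
    convert htot using 1
    · rfl
    push_cast
    ring
  have piece2 : ∫ b in a..(1:ℝ), ((a+b)/2) * (1 - (max a b)^2)^2
      = (a/2*1 - a/3*1^3 + a/10*1^5 + 1/4*1^2 - 1/4*1^4 + 1/12*1^6)
        - (a/2*a - a/3*a^3 + a/10*a^5 + 1/4*a^2 - 1/4*a^4 + 1/12*a^6) := by
    rw [intervalIntegral.integral_congr (g := fun b => ((a+b)/2) * (1 - b^2)^2)
      (fun b hb => by
        rw [uIcc_of_le ha.2] at hb
        simp only
        rw [max_eq_right hb.1])]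
    refine intervalIntegral.integral_eq_sub_of_hasDerivAt
      (f := fun b : ℝ => a/2*b - a/3*b^3 + a/10*b^5 + 1/4*b^2 - 1/4*b^4 + 1/12*b^6)
      (fun x _ => ?_) (Continuous.intervalIntegrable (by continuity) _ _)
    have h1 := lin_deriv (a/2) x
    have h3 := pow_deriv (a/3) 3 x
    have h5 := pow_deriv (a/10) 5 x
    have p2 := pow_deriv (1/4 : ℝ) 2 x
    have p4 := pow_deriv (1/4 : ℝ) 4 x
    have p6 := pow_deriv (1/12 : ℝ) 6 x
    have htot := ((((h1.sub h3).add h5).add p2).sub p4).add p6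
    convert htot using 1
    · rfl
    push_cast
    ring
  rw [piece1, piece2]
  ring

lemma poly_a : ∫ a in Icc (0:ℝ) 1,
    (1/12 + (4/15)*a - (11/12)*a^4 + (17/30)*a^6) ∂volume = 4/35 := by
  rw [integral_Icc_eq_integral_Ioc, ← intervalIntegral.integral_of_le zero_le_one]
  have key : ∫ a in (0:ℝ)..1, (1/12 + (4/15)*a - (11/12)*a^4 + (17/30)*a^6)
      = (1/12*1 + 2/15*1^2 - 11/60*1^5 + 17/210*1^7)
        - (1/12*0 + 2/15*(0:ℝ)^2 - 11/60*(0:ℝ)^5 + 17/210*(0:ℝ)^7) := by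
    refine intervalIntegral.integral_eq_sub_of_hasDerivAt
      (f := fun a : ℝ => 1/12*a + 2/15*a^2 - 11/60*a^5 + 17/210*a^7)
      (fun x _ => ?_) (Continuous.intervalIntegrable (by continuity) _ _)
    have h1 := lin_deriv (1/12 : ℝ) x
    have h2 := pow_deriv (2/15 : ℝ) 2 x
    have h5 := pow_deriv (11/60 : ℝ) 5 x
    have h7 := pow_deriv (17/210 : ℝ) 7 x
    have htot := ((h1.add h2).sub h5).add h7
    convert htot using 1
    · rfl
    push_cast
    ring
  rw [key]
  norm_num


def H2 (a b : ℝ) (r : ℝ × ℝ) : ℝ := qi r.1 * (qi r.2 * i2 a b r.1 r.2)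
def H3 (a b c : ℝ) (r : ℝ × ℝ × ℝ) : ℝ := qi r.1 * (i2 a b c r.1 * H2 a b r.2)
def G4 (a b : ℝ) (r : ℝ × ℝ × ℝ × ℝ) : ℝ := qi r.1 * H3 a b r.1 r.2

def P2 : Measure (ℝ × ℝ) := ν.prod ν
def P3 : Measure (ℝ × ℝ × ℝ) := ν.prod P2
def P4 : Measure (ℝ × ℝ × ℝ × ℝ) := ν.prod P3
def P5 : Measure (ℝ × ℝ × ℝ × ℝ × ℝ) := ν.prod P4

instance : IsProbabilityMeasure P2 := by unfold P2; infer_instance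
instance : IsProbabilityMeasure P3 := by unfold P3; infer_instance
instance : IsProbabilityMeasure P4 := by unfold P4; infer_instance
instance : IsProbabilityMeasure P5 := by unfold P5; infer_instance

lemma unit_norm {x : ℝ} (h : x ∈ Icc (0:ℝ) 1) : ‖x‖ ≤ 1 := by
  rw [Real.norm_eq_abs, abs_le]
  exact ⟨by linarith [h.1], h.2⟩

lemma i2m (a b : ℝ) : Measurable fun r : ℝ × ℝ => i2 a b r.1 r.2 := by
  unfold i2
  exact Measurable.ite (measurableSet_lt measurable_const
    (measurable_fst.max measurable_snd)) measurable_const measurable_const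

lemma H2_meas (a b : ℝ) : Measurable (H2 a b) :=
  (qi_meas.comp measurable_fst).mul ((qi_meas.comp measurable_snd).mul (i2m a b))

lemma H2_unit (a b : ℝ) (r : ℝ × ℝ) : H2 a b r ∈ Icc (0:ℝ) 1 :=
  unit_mul (qi_unit _) (unit_mul (qi_unit _) (i2_unit _ _ _ _))

lemma H3_meas (a b c : ℝ) : Measurable (H3 a b c) := by
  unfold H3
  refine (qi_meas.comp measurable_fst).mul (Measurable.mul ?_ ((H2_meas a b).comp measurable_snd))
  have : (fun r : ℝ × ℝ × ℝ => i2 a b c r.1)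
      = (fun p : ℝ × ℝ => i2 a b p.1 p.2) ∘ (fun r : ℝ × ℝ × ℝ => (c, r.1)) := rfl
  rw [this]
  exact (i2m a b).comp (measurable_const.prodMk measurable_fst)

lemma H3_unit (a b c : ℝ) (r : ℝ × ℝ × ℝ) : H3 a b c r ∈ Icc (0:ℝ) 1 :=
  unit_mul (qi_unit _) (unit_mul (i2_unit _ _ _ _) (H2_unit a b _))

lemma G4_meas (a b : ℝ) : Measurable (G4 a b) := by
  unfold G4 H3
  refine (qi_meas.comp measurable_fst).mul ?_
  refine (qi_meas.comp measurable_snd.fst).mul ?_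
  refine Measurable.mul ?_ ((H2_meas a b).comp measurable_snd.snd)
  have : (fun r : ℝ × ℝ × ℝ × ℝ => i2 a b r.1 r.2.1)
      = (fun p : ℝ × ℝ => i2 a b p.1 p.2) ∘ (fun r : ℝ × ℝ × ℝ × ℝ => (r.1, r.2.1)) := rfl
  rw [this]
  exact (i2m a b).comp (measurable_fst.prodMk measurable_snd.fst)

lemma G4_unit (a b : ℝ) (r : ℝ × ℝ × ℝ × ℝ) : G4 a b r ∈ Icc (0:ℝ) 1 :=
  unit_mul (qi_unit _) (H3_unit a b _ _)

def E2 (a b : ℝ) : ℝ := ∫ e, qi e * ∫ f, qi f * i2 a b e f ∂ν ∂ν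
def W (a b : ℝ) : ℝ := ∫ c, qi c * ∫ d, qi d * (i2 a b c d * E2 a b) ∂ν ∂ν

lemma E2_eq (a b : ℝ) (hm : max a b ∈ Icc (0:ℝ) 1) : E2 a b = 1 - (max a b)^2 :=
  L2 (max a b) hm

lemma W_eq (a b : ℝ) (hm : max a b ∈ Icc (0:ℝ) 1) : W a b = (1 - (max a b)^2)^2 := by
  have hE := E2_eq a b hm
  unfold W
  have h1 : ∀ c, (∫ d, qi d * (i2 a b c d * E2 a b) ∂ν)
      = E2 a b * ∫ d, qi d * i2 a b c d ∂ν := by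
    intro c
    rw [← integral_const_mul]
    congr 1
    funext d
    ring
  simp_rw [h1]
  have h2 : ∀ c, qi c * (E2 a b * ∫ d, qi d * i2 a b c d ∂ν)
      = E2 a b * (qi c * ∫ d, qi d * i2 a b c d ∂ν) := fun c => by ring
  simp_rw [h2, integral_const_mul]
  have h3 : ∀ c, (∫ d, qi d * i2 a b c d ∂ν) = if max a b < c then 1 else 1 - max a b :=
    fun c => Lf (max a b) c hm
  simp_rw [h3, Lmid (max a b) hm, hE]
  ring

lemma inner2 (a b : ℝ) : ∫ r, H2 a b r ∂P2 = E2 a b := by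
  unfold P2
  rw [integral_prod _ (intg (H2_meas a b).aestronglyMeasurable
    fun r => unit_norm (H2_unit a b r))]
  unfold E2
  refine integral_congr_ae (Filter.Eventually.of_forall fun e => ?_)
  show ∫ f, qi e * (qi f * i2 a b e f) ∂ν = qi e * ∫ f, qi f * i2 a b e f ∂ν
  exact integral_const_mul _ _

lemma inner3 (a b c : ℝ) : ∫ r, H3 a b c r ∂P3 = ∫ d, qi d * (i2 a b c d * E2 a b) ∂ν := by
  unfold P3
  rw [integral_prod _ (intg (H3_meas a b c).aestronglyMeasurable
    fun r => unit_norm (H3_unit a b c r))]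
  refine integral_congr_ae (Filter.Eventually.of_forall fun d => ?_)
  show ∫ r2, qi d * (i2 a b c d * H2 a b r2) ∂P2 = qi d * (i2 a b c d * E2 a b)
  rw [integral_const_mul, integral_const_mul, inner2]

lemma inner4 (a b : ℝ) : ∫ r, G4 a b r ∂P4 = W a b := by
  unfold P4
  rw [integral_prod _ (intg (G4_meas a b).aestronglyMeasurable
    fun r => unit_norm (G4_unit a b r))]
  unfold W
  refine integral_congr_ae (Filter.Eventually.of_forall fun c => ?_)
  show ∫ r3, qi c * H3 a b c r3 ∂P3 = qi c * ∫ d, qi d * (i2 a b c d * E2 a b) ∂ν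
  rw [integral_const_mul, inner3]

lemma int_FF : ∫ t, FF t ∂P = 4/35 := by
  rw [show P = ν.prod P5 from rfl,
    integral_prod _ (intg FF_meas.aestronglyMeasurable FF_bd)]
  have stepA : ∀ a : ℝ, ∫ r5, FF (a, r5) ∂P5
      = qi a * ∫ b, qi b * (((a+b)/2) * W a b) ∂ν := by
    intro a
    unfold P5
    rw [integral_prod (fun r5 => FF (a, r5)) (intg
      ((FF_meas.comp measurable_prodMk_left).aestronglyMeasurable)
      fun r => FF_bd _)]
    rw [← integral_const_mul]
    refine integral_congr_ae (Filter.Eventually.of_forall fun b => ?_)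
    show ∫ r4, qi a * (qi b * (((a + b)/2) * G4 a b r4)) ∂P4
        = qi a * (qi b * (((a+b)/2) * W a b))
    rw [integral_const_mul, integral_const_mul, integral_const_mul, inner4]
  simp_rw [stepA]
  have hb : ∀ a, a ∈ Icc (0:ℝ) 1 → ∫ b, qi b * (((a+b)/2) * W a b) ∂ν
      = 1/12 + (4/15)*a - (11/12)*a^4 + (17/30)*a^6 := by
    intro a ha
    show ∫ b in Icc (0:ℝ) 1, qi b * (((a+b)/2) * W a b) ∂volume = _
    rw [setIntegral_congr_fun measurableSet_Icc
      (g := fun b => ((a+b)/2) * (1 - (max a b)^2)^2) ?_]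
    · exact poly_b a ha
    · intro b hbb
      have hmax : max a b ∈ Icc (0:ℝ) 1 := ⟨le_max_of_le_left ha.1, max_le ha.2 hbb.2⟩
      show qi b * (((a+b)/2) * W a b) = ((a+b)/2) * (1 - (max a b)^2)^2
      rw [qi, if_pos hbb, one_mul, W_eq a b hmax]
  show ∫ a in Icc (0:ℝ) 1, (qi a * ∫ b, qi b * (((a+b)/2) * W a b) ∂ν) ∂volume = 4/35
  rw [setIntegral_congr_fun measurableSet_Icc
    (g := fun a => 1/12 + (4/15)*a - (11/12)*a^4 + (17/30)*a^6) ?_]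
  · exact poly_a
  · intro a ha
    show qi a * (∫ b, qi b * (((a+b)/2) * W a b) ∂ν) = _
    rw [qi, if_pos ha, one_mul, hb a ha]

lemma int_total : ∫ ω, g ω ∂μ = 12/35 := by
  rw [integral_congr_ae g_ae, integral_finset_sum _ fun d _ => hd_int d]
  have hval : ∀ d ∈ Finset.univ, ∫ ω, hd d ω ∂μ = 4/35 := by
    intro d _
    rw [int_hd d, int_h0_T, int_FF]
  rw [Finset.sum_congr rfl hval, Finset.sum_const]
  simp only [Finset.card_univ, Fintype.card_fin, nsmul_eq_mul]
  norm_num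

end S14

/-- With two equally likely scenarios and three decisions whose six costs `ω (i, d)` are
i.i.d. Uniform[0,1] (modelled by Lebesgue measure restricted to the unit cube in
`Fin 2 × Fin 3 → ℝ`), the expected average cost of the minimax-cost decision equals `12/35`.
(The minimax decision is a.s. unique; on ties the infimum over tied decisions is taken.) -/
theorem stmt14 :
    ∫ ω : Fin 2 × Fin 3 → ℝ,
        sInf {v : ℝ | ∃ d : Fin 3,
          (∀ d' : Fin 3, max (ω (0, d)) (ω (1, d)) ≤ max (ω (0, d')) (ω (1, d'))) ∧
          v = (ω (0, d) + ω (1, d)) / 2}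
      ∂(volume.restrict {ω : Fin 2 × Fin 3 → ℝ | ∀ p, ω p ∈ Set.Icc (0 : ℝ) 1}) =
    12 / 35 := by
  show ∫ ω, S14.g ω ∂(volume.restrict S14.cube) = 12/35
  rw [S14.restrict_eq]
  exact S14.int_total
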